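/- If σ is strongly erasing and verifies the optimality condition, then f_σ has sensitive dependence on initial conditions with sensitivity constant 1/2: for every x ∈ [0,1] and every δ > 0 there exist z with |x − z| < δ and n ∈ ℕ such that |f_σⁿ(x) − f_σⁿ(z)| ≥ 1/2. -/

import Mathlib

/-- Apply a `k`-block substitution blockwise to a finite word, dropping the
trailing partial block (the paper's truncation convention). -/
def blockApply (k : Nat) (sigma : List Bool -> List Bool) (w : List Bool) : List Bool :=
  if h : 0 < k && k <= w.length then
    sigma (w.take k) ++ blockApply k sigma (w.drop k)
  else []
termination_by w.length
decreasing_by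
  simp only [Bool.and_eq_true, decide_eq_true_eq] at h
  simp [List.length_drop]
  omega

/-- The length-`m` prefix of an infinite binary word. -/
def prefixOf (u : Nat -> Bool) (m : Nat) : List Bool := List.ofFn fun i : Fin m => u i

/-- Concatenation of the first `m` words of a sequence of finite words. -/
def concatPre (v : Nat -> List Bool) (m : Nat) : List Bool :=
  (List.ofFn fun i : Fin m => v i).flatten

/-- The optimality condition: every infinite binary word is an infinite
concatenation of nonempty images of length-`k` blocks under `sigma`. -/
def OC (k : Nat) (sigma : List Bool -> List Bool) : Prop :=
  ∀ w : Nat -> Bool, ∃ u : Nat -> List Bool,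
    (∀ i, (u i).length = k ∧ sigma (u i) ≠ []) ∧
    ∀ m, concatPre (fun i => sigma (u i)) m
        = prefixOf w (concatPre (fun i => sigma (u i)) m).length

/-- Value of a finite binary word read as binary digits after the point. -/
noncomputable def valFin (w : List Bool) : ℝ :=
  (w.zipIdx.map fun p => if p.1 then ((2:ℝ))⁻¹ ^ (p.2 + 1) else 0).sum

/-- Value of an infinite binary word read as binary digits after the point. -/
noncomputable def valInf (u : Nat -> Bool) : ℝ :=
  ∑' i : Nat, if u i then ((2:ℝ))⁻¹ ^ (i + 1) else 0

/-- A word is not eventually zero (it has infinitely many ones). -/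
def NEZ (u : Nat -> Bool) : Prop := ∀ n, ∃ m, n ≤ m ∧ u m = true

open Classical in
/-- The unique binary expansion of `x ∈ (0,1]` not ending in `0^∞`
(junk value, the zero word, if no such expansion exists). -/
noncomputable def tilde (x : ℝ) : Nat -> Bool :=
  if h : ∃ u : Nat -> Bool, NEZ u ∧ valInf u = x then h.choose else fun _ => false

open Classical in
/-- The interval map induced by the erasing `k`-block substitution `sigma`
(with erased block `weps`) acting on binary expansions: `f x = 0.sigma(x̃)`,
with value `0` at `x = 0` (no expansion not ending in `0^∞`) and when
`x̃ = weps^∞`. -/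
noncomputable def fSigma (k : Nat) (sigma : List Bool -> List Bool) (weps : List Bool)
    (x : ℝ) : ℝ :=
  if (¬ ∃ u : Nat -> Bool, NEZ u ∧ valInf u = x) ∨
     (∀ i : Nat, tilde x i = weps.getD (i % k) false) then 0
  else ⨆ n : Nat, valFin (blockApply k sigma (prefixOf (tilde x) (n * k)))

/-- The set of `k`-roundings of a finite word `w`: extensions of `w` of length
the least multiple of `k` that is `≥ |w|`. -/
def kRound (k : Nat) (w : List Bool) : Set (List Bool) :=
  {u | ∃ v : List Bool, u = w ++ v ∧ u.length = k * ((w.length + k - 1) / k)}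

/-- `wIter k sigma n w` is the set `w^[n]` of the paper: `w^[0] = {w}` and
`w^[n] = {sigma(r) : r a k-rounding of an element of w^[n-1]}`. -/
def wIter (k : Nat) (sigma : List Bool -> List Bool) : Nat -> List Bool -> Set (List Bool)
  | 0, w => {w}
  | n + 1, w => {u | ∃ p ∈ wIter k sigma n w, ∃ r ∈ kRound k p, u = blockApply k sigma r}

-- ===== basic valFin lemmas =====

noncomputable def valAux (n : Nat) (w : List Bool) : ℝ :=
  ((w.zipIdx n).map fun p => if p.1 then ((2:ℝ))⁻¹ ^ (p.2 + 1) else 0).sum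

lemma valAux_nil (n : Nat) : valAux n [] = 0 := by simp [valAux]

lemma valAux_cons (n : Nat) (b : Bool) (w : List Bool) :
    valAux n (b :: w) = (if b then ((2:ℝ))⁻¹ ^ (n+1) else 0) + valAux (n+1) w := by
  simp [valAux, List.zipIdx_cons]

lemma valAux_succ (n : Nat) (w : List Bool) : valAux (n+1) w = 2⁻¹ * valAux n w := by
  induction w generalizing n with
  | nil => simp [valAux_nil]
  | cons b w ih =>
      rw [valAux_cons, valAux_cons, ih, mul_add]
      congr 1
      by_cases hb : b <;> simp [hb, pow_succ, mul_comm]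

lemma valFin_eq_valAux (w : List Bool) : valFin w = valAux 0 w := by
  simp [valFin, valAux]

lemma valFin_nil : valFin [] = 0 := by simp [valFin]

lemma valFin_cons (b : Bool) (w : List Bool) :
    valFin (b :: w) = (if b then 2⁻¹ else 0) + 2⁻¹ * valFin w := by
  rw [valFin_eq_valAux, valAux_cons, valAux_succ, valFin_eq_valAux]
  norm_num

lemma valFin_nonneg (w : List Bool) : 0 ≤ valFin w := by
  induction w with
  | nil => simp [valFin_nil]
  | cons b w ih =>
      rw [valFin_cons]
      positivity

lemma valFin_le (w : List Bool) : valFin w ≤ 1 - 2⁻¹ ^ w.length := by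
  induction w with
  | nil => simp [valFin_nil]
  | cons b w ih =>
      rw [valFin_cons]
      have : (if b then (2⁻¹:ℝ) else 0) ≤ 2⁻¹ := by split <;> norm_num
      calc (if b then (2⁻¹:ℝ) else 0) + 2⁻¹ * valFin w
          ≤ 2⁻¹ + 2⁻¹ * (1 - 2⁻¹ ^ w.length) := by
            apply add_le_add this
            apply mul_le_mul_of_nonneg_left ih (by norm_num)
        _ = 1 - 2⁻¹ ^ (b :: w).length := by
            simp [List.length_cons, pow_succ]; ring

lemma valFin_le_one (w : List Bool) : valFin w ≤ 1 :=
  (valFin_le w).trans (by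
    have : (0:ℝ) ≤ 2⁻¹ ^ w.length := by positivity
    linarith)

lemma valFin_append (w v : List Bool) :
    valFin (w ++ v) = valFin w + 2⁻¹ ^ w.length * valFin v := by
  induction w with
  | nil => simp [valFin_nil]
  | cons b w ih =>
      simp only [List.cons_append, valFin_cons, ih, List.length_cons]
      ring

-- ===== prefixOf lemmas =====

lemma prefixOf_zero (u : Nat → Bool) : prefixOf u 0 = [] := by simp [prefixOf]

lemma prefixOf_length (u : Nat → Bool) (m : Nat) : (prefixOf u m).length = m := by
  simp [prefixOf]

lemma prefixOf_cons (u : Nat → Bool) (m : Nat) :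
    prefixOf u (m+1) = u 0 :: prefixOf (fun i => u (i+1)) m := by
  simp [prefixOf, List.ofFn_succ]

lemma prefixOf_succ (u : Nat → Bool) (m : Nat) :
    prefixOf u (m+1) = prefixOf u m ++ [u m] := by
  rw [prefixOf, List.ofFn_succ', List.concat_eq_append]
  simp [prefixOf]

lemma prefixOf_add (u : Nat → Bool) (a b : Nat) :
    prefixOf u (a + b) = prefixOf u a ++ prefixOf (fun i => u (a + i)) b := by
  induction b with
  | zero => simp [prefixOf_zero]
  | succ b ih => rw [← Nat.add_assoc, prefixOf_succ, ih, prefixOf_succ, List.append_assoc]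

lemma prefixOf_getElem (u : Nat → Bool) (m i : Nat) (h : i < (prefixOf u m).length) :
    (prefixOf u m)[i] = u i := by
  simp [prefixOf]

-- ===== valInf lemmas =====

lemma valInf_summable (u : Nat → Bool) :
    Summable (fun i => if u i then ((2:ℝ))⁻¹ ^ (i + 1) else 0) := by
  have hg : Summable (fun i : ℕ => ((2:ℝ))⁻¹ ^ (i+1)) := by
    have := (summable_geometric_of_lt_one (by norm_num : (0:ℝ) ≤ 2⁻¹)
      (by norm_num : (2:ℝ)⁻¹ < 1))
    exact (summable_nat_add_iff 1).mpr this
  exact hg.of_nonneg_of_le (fun i => by positivity)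
    (fun i => by split <;> simp [pow_nonneg])

lemma valInf_nonneg (u : Nat → Bool) : 0 ≤ valInf u :=
  tsum_nonneg fun i => by positivity

lemma valInf_cons (u : Nat → Bool) :
    valInf u = (if u 0 then 2⁻¹ else 0) + 2⁻¹ * valInf (fun i => u (i+1)) := by
  rw [valInf, (valInf_summable u).tsum_eq_zero_add]
  congr 1
  · norm_num
  · rw [valInf, ← tsum_mul_left]
    congr 1; funext i
    split <;> simp [pow_succ, mul_comm] <;> ring


lemma valInf_prefix (u : Nat → Bool) (m : Nat) :
    valInf u = valFin (prefixOf u m) + 2⁻¹ ^ m * valInf (fun i => u (m + i)) := by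
  induction m generalizing u with
  | zero => simp [prefixOf_zero, valFin_nil]
  | succ m ih =>
      rw [valInf_cons, prefixOf_cons, valFin_cons, ih (fun i => u (i+1))]
      have : (fun i => u (i + 1 + m)) = (fun i => u (m + 1 + i)) := by
        funext i; congr 1; omega
      rw [pow_succ, show (fun i => u (m + i + 1)) = (fun i => u (m + 1 + i)) by
        funext i; congr 1; omega]
      ring

lemma valInf_le_one (u : Nat → Bool) : valInf u ≤ 1 := by
  have h : ∀ i : ℕ, (if u i then ((2:ℝ))⁻¹ ^ (i+1) else 0) ≤ 2⁻¹ ^ (i+1) := by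
    intro i; split
    · exact le_rfl
    · positivity
  have hg : Summable (fun i : ℕ => ((2:ℝ))⁻¹ ^ (i+1)) :=
    (summable_nat_add_iff 1).mpr (summable_geometric_of_lt_one (by norm_num) (by norm_num))
  have := Summable.tsum_le_tsum h (valInf_summable u) hg
  rw [valInf]
  refine this.trans ?_
  have : ∑' i : ℕ, ((2:ℝ))⁻¹ ^ (i+1) = 2⁻¹ * ∑' i : ℕ, ((2:ℝ))⁻¹ ^ i := by
    rw [← tsum_mul_left]; congr 1; funext i; rw [pow_succ]; ring
  rw [this, tsum_geometric_of_lt_one (by norm_num) (by norm_num)]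
  norm_num

lemma valFin_prefix_le (u : Nat → Bool) (m : Nat) : valFin (prefixOf u m) ≤ valInf u := by
  rw [valInf_prefix u m]
  have := valInf_nonneg (fun i => u (m + i))
  have : (0:ℝ) ≤ 2⁻¹ ^ m * valInf (fun i => u (m + i)) := by positivity
  linarith

lemma valInf_le_prefix (u : Nat → Bool) (m : Nat) :
    valInf u ≤ valFin (prefixOf u m) + 2⁻¹ ^ m := by
  rw [valInf_prefix u m]
  have h1 := valInf_le_one (fun i => u (m + i))
  have h2 : (0:ℝ) < 2⁻¹ ^ m := by positivity
  nlinarith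

lemma valInf_pos (u : Nat → Bool) (h : ∃ m, u m = true) : 0 < valInf u := by
  obtain ⟨m, hm⟩ := h
  have hle : ((2:ℝ))⁻¹ ^ (m+1) ≤ valInf u := by
    have := Summable.le_tsum (valInf_summable u) m (fun j _ => by positivity)
    rw [valInf]
    simpa [hm] using this
  have : (0:ℝ) < 2⁻¹ ^ (m+1) := by positivity
  linarith

lemma NEZ_shift (u : Nat → Bool) (h : NEZ u) (m : Nat) : NEZ (fun i => u (m + i)) := by
  intro n
  obtain ⟨j, hj, hval⟩ := h (m + n)
  exact ⟨j - m, by omega, by simp only []; rw [show m + (j - m) = j by omega]; exact hval⟩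

lemma valInf_lt_of_ne (u v : Nat → Bool) (m : Nat)
    (hpre : prefixOf u m = prefixOf v m) (hu : u m = true) (hv : v m = false)
    (hNEZ : NEZ u) : valInf v < valInf u := by
  rw [valInf_prefix u (m+1), valInf_prefix v (m+1), prefixOf_succ, prefixOf_succ,
    hu, hv, hpre, valFin_append, valFin_append]
  have h1 : valInf (fun i => v (m + 1 + i)) ≤ 1 := valInf_le_one _
  have h2 : 0 < valInf (fun i => u (m + 1 + i)) := by
    apply valInf_pos
    obtain ⟨j, hj, hval⟩ := NEZ_shift u hNEZ (m+1) 0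
    exact ⟨j, hval⟩
  have h3 : valFin [true] = 2⁻¹ := by rw [show [true] = true :: ([]:List Bool) from rfl, valFin_cons, valFin_nil]; norm_num
  have h4 : valFin [false] = 0 := by rw [show [false] = false :: ([]:List Bool) from rfl, valFin_cons, valFin_nil]; norm_num
  rw [h3, h4, prefixOf_length]
  have h5 : (0:ℝ) < 2⁻¹ ^ m := by positivity
  have h6 : (0:ℝ) < 2⁻¹ ^ (m+1) := by positivity
  rw [pow_succ] at h6 ⊢
  nlinarith

lemma valInf_injOn_NEZ {u v : Nat → Bool} (hu : NEZ u) (hv : NEZ v)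
    (h : valInf u = valInf v) : u = v := by
  by_contra hne
  have hex : ∃ m, u m ≠ v m := by
    by_contra hc; push_neg at hc; exact hne (funext hc)
  classical
  set m := Nat.find hex with hm
  have hdiff : u m ≠ v m := Nat.find_spec hex
  have hpre : prefixOf u m = prefixOf v m := by
    apply List.ext_getElem (by simp [prefixOf_length])
    intro i h1 h2
    rw [prefixOf_getElem, prefixOf_getElem]
    have : i < m := by simpa [prefixOf_length] using h1
    by_contra hcc
    exact absurd hcc (not_not.mpr (by
      have := Nat.find_min hex this
      simpa using this))
  cases hum : u m with
  | true =>
      have hvm : v m = false := by cases hvm : v m with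
        | true => exact absurd (hum.trans hvm.symm) hdiff
        | false => rfl
      have := valInf_lt_of_ne u v m hpre hum hvm hu
      linarith [h.le, h.ge, this]
  | false =>
      have hvm : v m = true := by cases hvm : v m with
        | true => rfl
        | false => exact absurd (hum.trans hvm.symm) hdiff
      have := valInf_lt_of_ne v u m hpre.symm hvm hum hv
      linarith [h.le, this]

lemma tilde_valInf (u : Nat → Bool) (hu : NEZ u) : tilde (valInf u) = u := by
  classical
  rw [tilde, dif_pos ⟨u, hu, rfl⟩]
  generalize_proofs h
  exact valInf_injOn_NEZ h.choose_spec.1 hu h.choose_spec.2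

lemma valInf_const_false : valInf (fun _ => false) = 0 := by
  simp [valInf]

lemma valInf_const_true : valInf (fun _ => true) = 1 := by
  have h : ∀ i : ℕ, (if (fun _ => true) i = true then ((2:ℝ))⁻¹ ^ (i+1) else 0)
      = 2⁻¹ ^ (i+1) := fun i => by simp
  rw [valInf, tsum_congr h]
  have : ∑' i : ℕ, ((2:ℝ))⁻¹ ^ (i+1) = 2⁻¹ * ∑' i : ℕ, ((2:ℝ))⁻¹ ^ i := by
    rw [← tsum_mul_left]; congr 1; funext i; rw [pow_succ]; ring
  rw [this, tsum_geometric_of_lt_one (by norm_num) (by norm_num)]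
  norm_num

-- existence of a NEZ expansion for x ∈ (0,1]
lemma exists_pow_small (e : ℝ) (he : 0 < e) : ∃ m : ℕ, ((2:ℝ))⁻¹ ^ m < e := by
  obtain ⟨m, hm⟩ := exists_pow_lt_of_lt_one he (by norm_num : (2:ℝ)⁻¹ < 1)
  exact ⟨m, hm⟩

lemma eq_of_abs_sub_le_pow (a b : ℝ) (h : ∀ m : ℕ, |a - b| ≤ ((2:ℝ))⁻¹ ^ m) : a = b := by
  by_contra hne
  have habs : 0 < |a - b| := abs_pos.mpr (sub_ne_zero.mpr hne)
  obtain ⟨m, hm⟩ := exists_pow_small _ habs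
  exact absurd (h m) (not_le.mpr hm)

lemma exists_NEZ_expansion (x : ℝ) (hx0 : 0 < x) (hx1 : x ≤ 1) :
    ∃ u : Nat → Bool, NEZ u ∧ valInf u = x := by
  classical
  set c : ℕ → ℤ := fun i => ⌈(2:ℝ)^i * x⌉ with hc
  have hub : ∀ i, 2^i * x ≤ (c i : ℝ) := fun i => Int.le_ceil _
  have hlb : ∀ i, (c i : ℝ) - 1 < 2^i * x := by
    intro i
    have := Int.ceil_lt_add_one ((2:ℝ)^i * x)
    simpa [hc] using by linarith [this]
  have hc0 : c 0 = 1 := by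
    have h1 : c 0 ≤ 1 := by
      rw [hc]; exact Int.ceil_le.mpr (by push_cast; simpa using hx1)
    have h2 : 0 < c 0 := by
      rw [hc]; exact Int.lt_ceil.mpr (by push_cast; simpa using hx0)
    omega
  have hstep : ∀ i, c (i+1) = 2 * c i - 1 ∨ c (i+1) = 2 * c i := by
    intro i
    have h1 : c (i+1) ≤ 2 * c i := by
      rw [hc]; apply Int.ceil_le.mpr
      push_cast
      have := hub i
      calc (2:ℝ)^(i+1) * x = 2 * (2^i * x) := by ring
        _ ≤ 2 * (c i : ℝ) := by linarith
    have h2 : 2 * c i - 2 < c (i+1) := by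
      rw [hc]; apply Int.lt_ceil.mpr
      push_cast
      have := hlb i
      calc ((2:ℝ) * (c i) - 2) = 2 * ((c i : ℝ) - 1) := by ring
        _ < 2 * (2^i * x) := by linarith
        _ = 2^(i+1) * x := by ring
    omega
  set u : ℕ → Bool := fun i => decide (c (i+1) = 2 * c i) with hu
  have hval : ∀ m, valFin (prefixOf u m) = ((c m : ℝ) - 1) * 2⁻¹ ^ m := by
    intro m
    induction m with
    | zero => simp [prefixOf_zero, valFin_nil, hc0]
    | succ m ih =>
        rw [prefixOf_succ, valFin_append, ih, prefixOf_length]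
        have hvf : ∀ b : Bool, valFin [b] = if b then 2⁻¹ else 0 := by
          intro b
          rw [show [b] = b :: ([]:List Bool) from rfl, valFin_cons, valFin_nil]
          ring
        rw [hvf]
        by_cases hb : c (m+1) = 2 * c m
        · rw [if_pos (by rw [hu]; simpa using hb), hb]
          push_cast
          rw [pow_succ]
          ring
        · have hb2 : c (m+1) = 2 * c m - 1 := by rcases hstep m with h|h; exact h; exact absurd h hb
          rw [if_neg (by rw [hu]; simpa using hb), hb2]
          push_cast
          rw [pow_succ]
          ring
  have hgap : ∀ m, 0 < x - valFin (prefixOf u m) ∧ x - valFin (prefixOf u m) ≤ 2⁻¹ ^ m := by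
    intro m
    rw [hval m]
    have h1 := hlb m
    have h2 := hub m
    have hp : (0:ℝ) < 2^m := by positivity
    have hip : ((2:ℝ))⁻¹ ^ m = ((2:ℝ)^m)⁻¹ := by rw [inv_pow]
    constructor
    · rw [hip]
      rw [sub_pos, ← div_eq_mul_inv, div_lt_iff₀ hp]
      nlinarith
    · rw [hip, ← div_eq_mul_inv, sub_le_iff_le_add,
        show ((2:ℝ)^m)⁻¹ + (↑(c m) - 1) / 2 ^ m = ↑(c m) / 2^m by field_simp; ring,
        le_div_iff₀ hp]
      nlinarith
  have hNEZ : NEZ u := by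
    intro n
    by_contra hcon
    push_neg at hcon
    have hconst : ∀ m, n ≤ m → valFin (prefixOf u m) = valFin (prefixOf u n) := by
      intro m hm
      induction m with
      | zero =>
          have : n = 0 := by omega
          rw [this]
      | succ m ih =>
          rcases Nat.lt_or_ge n (m+1) with h|h
          · have hnm : n ≤ m := by omega
            have hum : u m = false := by
              have := hcon m hnm
              cases hval2 : u m
              · rfl
              · exact absurd hval2 this
            rw [prefixOf_succ, valFin_append, hum]
            rw [show valFin [false] = 0 by
              rw [show [false] = false :: ([]:List Bool) from rfl, valFin_cons, valFin_nil]; norm_num]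
            rw [ih hnm]; ring
          · have : n = m + 1 := by omega
            rw [this]
    obtain ⟨m, hm⟩ := exists_pow_small (x - valFin (prefixOf u n)) (hgap n).1
    have hmn : x - valFin (prefixOf u (max m n)) ≤ 2⁻¹ ^ (max m n) := (hgap _).2
    rw [hconst _ (le_max_right m n)] at hmn
    have : ((2:ℝ))⁻¹ ^ (max m n) ≤ 2⁻¹ ^ m :=
      pow_le_pow_of_le_one (by norm_num) (by norm_num) (le_max_left m n)
    linarith
  refine ⟨u, hNEZ, ?_⟩
  apply eq_of_abs_sub_le_pow
  intro m
  have h1 := valFin_prefix_le u m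
  have h2 := valInf_le_prefix u m
  have h3 := hgap m
  rw [abs_sub_le_iff]
  constructor <;> linarith [h3.1, h3.2]

-- ===== blockApply lemmas =====

lemma blockApply_nil (k : Nat) (sigma : List Bool → List Bool) :
    blockApply k sigma [] = [] := by
  rw [blockApply, dif_neg]
  simp only [Bool.and_eq_true, decide_eq_true_eq, List.length_nil]
  omega

lemma blockApply_of_le (k : Nat) (sigma : List Bool → List Bool) (w : List Bool)
    (hk : 0 < k) (hw : k ≤ w.length) :
    blockApply k sigma w = sigma (w.take k) ++ blockApply k sigma (w.drop k) := by
  rw [blockApply, dif_pos]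
  simp only [Bool.and_eq_true, decide_eq_true_eq]
  exact ⟨hk, hw⟩

lemma blockApply_short (k : Nat) (sigma : List Bool → List Bool) (w : List Bool)
    (hw : w.length < k) : blockApply k sigma w = [] := by
  rw [blockApply, dif_neg]
  simp only [Bool.and_eq_true, decide_eq_true_eq]
  omega

lemma blockApply_append_aux (k : Nat) (sigma : List Bool → List Bool) (hk : 0 < k) :
    ∀ (q : Nat) (a b : List Bool), a.length = q * k →
    blockApply k sigma (a ++ b) = blockApply k sigma a ++ blockApply k sigma b := by
  intro q
  induction q with
  | zero =>
      intro a b ha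
      have : a = [] := List.eq_nil_of_length_eq_zero (by simpa using ha)
      simp [this, blockApply_nil]
  | succ q ih =>
      intro a b ha
      have hak : k ≤ a.length := by rw [ha]; nlinarith [Nat.one_le_iff_ne_zero.mpr (by omega : q+1 ≠ 0)]
      rw [blockApply_of_le k sigma (a ++ b) hk (by rw [List.length_append]; omega),
        blockApply_of_le k sigma a hk hak,
        List.take_append_of_le_length hak, List.drop_append_of_le_length hak,
        ih (a.drop k) b (by rw [List.length_drop, ha, Nat.succ_mul]; omega), List.append_assoc]

lemma blockApply_append (k : Nat) (sigma : List Bool → List Bool) (hk : 0 < k)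
    (a b : List Bool) (ha : k ∣ a.length) :
    blockApply k sigma (a ++ b) = blockApply k sigma a ++ blockApply k sigma b := by
  obtain ⟨q, hq⟩ := ha
  exact blockApply_append_aux k sigma hk q a b (by rw [hq, Nat.mul_comm])

lemma blockApply_join (k : Nat) (sigma : List Bool → List Bool) (hk : 0 < k) :
    ∀ (L : List (List Bool)), (∀ l ∈ L, l.length = k) →
    blockApply k sigma L.flatten = (L.map sigma).flatten := by
  intro L
  induction L with
  | nil => simp [blockApply_nil]
  | cons l L ih =>
      intro hl
      show blockApply k sigma (l ++ L.flatten) = sigma l ++ (List.map sigma L).flatten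
      rw [blockApply_append k sigma hk l L.flatten
        (by rw [hl l (by simp)]), ih (fun x hx => hl x (by simp [hx]))]
      congr 1
      have hlk : l.length = k := hl l (by simp)
      rw [blockApply_of_le k sigma l hk (by omega)]
      rw [List.take_of_length_le (by omega), List.drop_of_length_le (by omega), blockApply_nil,
        List.append_nil]

-- ===== app and blockFun =====

def app (w : List Bool) (s : Nat → Bool) : Nat → Bool :=
  fun i => if h : i < w.length then w[i] else s (i - w.length)

lemma prefixOf_app_le (w : List Bool) (s : Nat → Bool) (j : Nat) (hj : j ≤ w.length) :
    prefixOf (app w s) j = w.take j := by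
  apply List.ext_getElem (by simp [prefixOf_length]; omega)
  intro i h1 h2
  have hi : i < j := by simpa [prefixOf_length] using h1
  rw [prefixOf_getElem, List.getElem_take]
  rw [app, dif_pos (by omega)]

lemma prefixOf_app (w : List Bool) (s : Nat → Bool) (j : Nat) :
    prefixOf (app w s) (w.length + j) = w ++ prefixOf s j := by
  apply List.ext_getElem (by simp [prefixOf_length])
  intro i h1 h2
  rw [prefixOf_getElem]
  rcases Nat.lt_or_ge i w.length with h|h
  · rw [List.getElem_append_left h, app, dif_pos h]
  · rw [List.getElem_append_right h, prefixOf_getElem, app, dif_neg (by omega)]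

lemma app_prefix_shift (s : Nat → Bool) (m : Nat) :
    app (prefixOf s m) (fun i => s (m + i)) = s := by
  funext i
  rw [app]
  split
  · rw [prefixOf_getElem]
  · rw [prefixOf_length]
    congr 1
    rw [prefixOf_length] at *
    omega

lemma NEZ_app (w : List Bool) (s : Nat → Bool) (hs : NEZ s) : NEZ (app w s) := by
  intro n
  obtain ⟨m, hm, hv⟩ := hs n
  refine ⟨w.length + m, by omega, ?_⟩
  rw [app, dif_neg (by omega)]
  rw [show w.length + m - w.length = m by omega]
  exact hv

def blockFun (k : Nat) (B : Nat → List Bool) : Nat → Bool :=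
  fun j => (B (j / k)).getD (j % k) false

lemma prefixOf_blockFun (k : Nat) (B : Nat → List Bool) (hk : 0 < k)
    (hB : ∀ i, (B i).length = k) (m : Nat) :
    prefixOf (blockFun k B) (m * k) = (List.ofFn fun i : Fin m => B i).flatten := by
  induction m with
  | zero => simp [prefixOf_zero]
  | succ m ih =>
      rw [Nat.succ_mul, prefixOf_add, ih, List.ofFn_succ', List.concat_eq_append]
      rw [List.flatten_append]
      congr 1
      · have h1 : ([B ((Fin.last m : Fin (m+1)) : Nat)] : List (List Bool)).flatten = B m := by
          simp [Fin.val_last]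
        rw [h1]
        apply List.ext_getElem (by simp [prefixOf_length, hB])
        intro i h1 h2
        have hik : i < k := by simpa [prefixOf_length] using h1
        rw [prefixOf_getElem]
        show blockFun k B (m*k+i) = _
        simp only [blockFun]
        have hd : (m * k + i) / k = m := by
          rw [Nat.mul_comm m k, Nat.mul_add_div hk, Nat.div_eq_of_lt hik]
          omega
        have hmm : (m * k + i) % k = i := by
          rw [Nat.mul_comm m k, Nat.mul_add_mod, Nat.mod_eq_of_lt hik]
        rw [hd, hmm, List.getD_eq_getElem (B m) false (by rw [hB m]; exact hik)]

-- ===== sup over growing prefixes =====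

lemma ciSup_prefix (t : Nat → Bool) (g : Nat → List Bool)
    (hpre : ∀ m, g m = prefixOf t (g m).length)
    (hlen : ∀ L : Nat, ∃ m, L ≤ (g m).length) :
    ⨆ m : Nat, valFin (g m) = valInf t := by
  have hub : ∀ m, valFin (g m) ≤ valInf t := by
    intro m
    rw [hpre m]
    exact valFin_prefix_le t (g m).length
  have hbdd : BddAbove (Set.range fun m => valFin (g m)) := by
    refine ⟨valInf t, ?_⟩
    rintro y ⟨m, rfl⟩
    exact hub m
  apply le_antisymm (ciSup_le hub)
  apply le_of_forall_pos_le_add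
  intro ε hε
  obtain ⟨mm, hmm⟩ := exists_pow_small ε hε
  obtain ⟨m, hm⟩ := hlen mm
  have h1 : valInf t ≤ valFin (prefixOf t (g m).length) + 2⁻¹ ^ (g m).length :=
    valInf_le_prefix t (g m).length
  rw [← hpre m] at h1
  have h2 : ((2:ℝ))⁻¹ ^ (g m).length ≤ 2⁻¹ ^ mm :=
    pow_le_pow_of_le_one (by norm_num) (by norm_num) hm
  have h3 : valFin (g m) ≤ ⨆ m : Nat, valFin (g m) := le_ciSup hbdd m
  linarith

-- ===== Follows and fSigma =====

def Follows (k : Nat) (sigma : List Bool → List Bool) (s t : Nat → Bool) : Prop :=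
  (∀ m, blockApply k sigma (prefixOf s (m*k))
      = prefixOf t (blockApply k sigma (prefixOf s (m*k))).length)
  ∧ ∀ L : Nat, ∃ m, L ≤ (blockApply k sigma (prefixOf s (m*k))).length

section main
variable {k : Nat} {sigma : List Bool → List Bool} {weps : List Bool}
variable (hk : 0 < k) (hwlen : weps.length = k)
  (herase : ∀ w : List Bool, w.length = k → (sigma w = [] ↔ w = weps))

include hk hwlen herase in
lemma fSigma_val (s t : Nat → Bool) (hs : NEZ s) (hf : Follows k sigma s t) :
    fSigma k sigma weps (valInf s) = valInf t := by
  have hex : ∃ u : Nat → Bool, NEZ u ∧ valInf u = valInf s := ⟨s, hs, rfl⟩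
  have ht : tilde (valInf s) = s := tilde_valInf s hs
  have hnp : ¬ (∀ i : Nat, tilde (valInf s) i = weps.getD (i % k) false) := by
    intro hpat
    have hsb : s = blockFun k (fun _ => weps) := by
      funext i
      rw [← ht, hpat i]
      rfl
    have hall : ∀ m, blockApply k sigma (prefixOf s (m*k)) = [] := by
      intro m
      rw [hsb, prefixOf_blockFun k _ hk (fun _ => hwlen) m,
        blockApply_join k sigma hk _ (by
          intro l hl
          rw [List.mem_ofFn] at hl
          obtain ⟨i, hi⟩ := hl
          rw [← hi]
          exact hwlen)]
      have hwe : sigma weps = [] := (herase weps hwlen).mpr rfl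
      rw [List.flatten_eq_nil_iff]
      intro l hl
      obtain ⟨a, hamem, rfl⟩ := List.mem_map.mp hl
      rw [List.mem_ofFn] at hamem
      obtain ⟨i, hi⟩ := hamem
      rw [← hi]
      exact hwe
    obtain ⟨m, hm⟩ := hf.2 1
    rw [hall m] at hm
    simp at hm
  rw [fSigma, if_neg (fun h => h.elim (fun h1 => h1 hex) hnp), ht]
  exact ciSup_prefix t _ hf.1 hf.2

lemma fSigma_nonneg (x : ℝ) : 0 ≤ fSigma k sigma weps x := by
  rw [fSigma]
  split
  · exact le_rfl
  · exact Real.iSup_nonneg fun n => valFin_nonneg _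

lemma fSigma_zero : fSigma k sigma weps 0 = 0 := by
  rw [fSigma, if_pos]
  left
  rintro ⟨u, hu, h0⟩
  obtain ⟨m, _, hv⟩ := hu 0
  exact absurd h0 (ne_of_gt (valInf_pos u ⟨m, hv⟩))

end main

-- ===== concatPre lemmas =====

lemma concatPre_zero (v : Nat → List Bool) : concatPre v 0 = [] := by
  simp [concatPre]

lemma concatPre_succ (v : Nat → List Bool) (m : Nat) :
    concatPre v (m+1) = concatPre v m ++ v m := by
  rw [concatPre, concatPre, List.ofFn_succ', List.concat_eq_append]
  rw [List.flatten_append]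
  simp [Fin.val_last]

lemma concatPre_len (v : Nat → List Bool) (h : ∀ i, v i ≠ []) (m : Nat) :
    m ≤ (concatPre v m).length := by
  induction m with
  | zero => omega
  | succ m ih =>
      rw [concatPre_succ, List.length_append]
      have := List.length_pos_iff.mpr (h m)
      omega

lemma ne_replicate_false (w : List Bool) (h : w ≠ List.replicate w.length false) :
    ∃ j, j < w.length ∧ w.getD j false = true := by
  by_contra hc
  push_neg at hc
  apply h
  apply List.ext_getElem (by simp)
  intro i h1 h2
  have := hc i h1
  rw [List.getD_eq_getElem w false h1] at this
  simp only [List.getElem_replicate]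
  cases hv : w[i]
  · rfl
  · exact absurd hv this

section main2
variable {k : Nat} {sigma : List Bool → List Bool} {weps : List Bool}
variable (hk : 0 < k) (hwlen : weps.length = k)
  (herase : ∀ w : List Bool, w.length = k → (sigma w = [] ↔ w = weps))

include hk in
lemma blockFun_apply (B : Nat → List Bool) (i j : Nat) (hj : j < k) :
    blockFun k B (i * k + j) = (B i).getD j false := by
  simp only [blockFun]
  have hd : (i * k + j) / k = i := by
    rw [Nat.mul_comm i k, Nat.mul_add_div hk, Nat.div_eq_of_lt hj]
    omega
  have hm : (i * k + j) % k = j := by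
    rw [Nat.mul_comm i k, Nat.mul_add_mod, Nat.mod_eq_of_lt hj]
  rw [hd, hm]

include hk in
lemma blockApply_prefix_blockFun (B : Nat → List Bool) (hB : ∀ i, (B i).length = k) (m : Nat) :
    blockApply k sigma (prefixOf (blockFun k B) (m*k))
      = (List.ofFn fun i : Fin m => sigma (B i)).flatten := by
  rw [prefixOf_blockFun k B hk hB m, blockApply_join k sigma hk _ (by
    intro l hl
    rw [List.mem_ofFn] at hl
    obtain ⟨i, hi⟩ := hl
    rw [← hi]
    exact hB i)]
  rw [List.map_ofFn]
  rfl

include hk hwlen herase in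
lemma exists_pre (hOC : OC k sigma) (t : Nat → Bool) :
    ∃ d : Nat → Bool, NEZ d ∧ Follows k sigma d t := by
  obtain ⟨u, hu1, hu2⟩ := hOC t
  by_cases hw0 : weps = List.replicate k false
  · -- weps is all-false; the OC blocks themselves are NEZ
    refine ⟨blockFun k u, ?_, ?_, ?_⟩
    · -- NEZ
      intro n
      have hune : u n ≠ List.replicate (u n).length false := by
        rw [(hu1 n).1, ← hw0]
        intro hne
        exact (hu1 n).2 ((herase (u n) (hu1 n).1).mpr hne)
      obtain ⟨j, hj, hval⟩ := ne_replicate_false (u n) hune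
      rw [(hu1 n).1] at hj
      refine ⟨n * k + j, by nlinarith, ?_⟩
      rw [blockFun_apply hk u n j hj]
      exact hval
    · intro m
      rw [blockApply_prefix_blockFun hk (B := u) (fun i => (hu1 i).1) m]
      exact hu2 m
    · intro L
      refine ⟨L, ?_⟩
      rw [blockApply_prefix_blockFun hk (B := u) (fun i => (hu1 i).1) L]
      exact concatPre_len _ (fun i => (hu1 i).2) L
  · -- weps contains a one; interleave weps blocks
    set B : Nat → List Bool := fun i => if i % 2 = 0 then weps else u (i/2) with hBdef
    have hB : ∀ i, (B i).length = k := by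
      intro i
      by_cases h : i % 2 = 0 <;> simp only [hBdef, h, if_true, if_false]
      · exact hwlen
      · exact (hu1 _).1
    have hwe : sigma weps = [] := (herase weps hwlen).mpr rfl
    have hjoin : ∀ m, (List.ofFn fun i : Fin m => sigma (B i)).flatten
        = concatPre (fun i => sigma (u i)) (m/2) := by
      intro m
      induction m with
      | zero => simp [concatPre_zero]
      | succ m ih =>
          rw [List.ofFn_succ', List.concat_eq_append]
          rw [List.flatten_append]
          simp only [List.flatten_cons, List.flatten_nil, List.append_nil]
          have : (List.ofFn fun i : Fin m => sigma (B i)).flatten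
              = (List.ofFn fun i : Fin m => sigma (B ↑(Fin.castSucc i))).flatten := rfl
          rw [← this, ih]
          simp only [Fin.val_last]
          by_cases hm : m % 2 = 0
          · have hBm : B m = weps := by rw [hBdef]; exact if_pos hm
            rw [hBm, hwe, List.append_nil]
            congr 1
            omega
          · have hBm : B m = u (m/2) := by rw [hBdef]; exact if_neg hm
            rw [hBm, ← concatPre_succ]
            congr 1
            omega
    refine ⟨blockFun k B, ?_, ?_, ?_⟩
    · -- NEZ
      intro n
      have hwne : weps ≠ List.replicate weps.length false := by
        rw [hwlen]; exact hw0
      obtain ⟨j, hj, hval⟩ := ne_replicate_false weps hwne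
      rw [hwlen] at hj
      refine ⟨(2*n) * k + j, by nlinarith, ?_⟩
      rw [blockFun_apply hk B (2*n) j hj]
      rw [show B (2*n) = weps from by rw [hBdef]; exact if_pos (by omega)]
      exact hval
    · intro m
      rw [blockApply_prefix_blockFun hk (B := B) hB m]
      rw [show ((List.ofFn fun i : Fin m => sigma (B ↑i)).flatten : List Bool)
        = concatPre (fun i => sigma (u i)) (m/2) from hjoin m]
      exact hu2 (m/2)
    · intro L
      refine ⟨2*L, ?_⟩
      rw [blockApply_prefix_blockFun hk (B := B) hB (2*L)]
      rw [show ((List.ofFn fun i : Fin (2*L) => sigma (B ↑i)).flatten : List Bool)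
        = concatPre (fun i => sigma (u i)) ((2*L)/2) from hjoin (2*L)]
      rw [show (2*L)/2 = L by omega]
      exact concatPre_len _ (fun i => (hu1 i).2) L
end main2

lemma app_nil (t : Nat → Bool) : app [] t = t := by
  funext i
  rw [app, dif_neg (by simp)]
  simp

section main3
variable {k : Nat} {sigma : List Bool → List Bool} {weps : List Bool}
variable (hk : 0 < k) (hwlen : weps.length = k)
  (herase : ∀ w : List Bool, w.length = k → (sigma w = [] ↔ w = weps))

include hk in
lemma follows_app (r : List Bool) (hr : k ∣ r.length) (d t : Nat → Bool)
    (hd : Follows k sigma d t) :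
    Follows k sigma (app r d) (app (blockApply k sigma r) t) := by
  set W := blockApply k sigma r with hW
  obtain ⟨q, hq⟩ := hr
  constructor
  · intro m
    rcases le_or_gt (m*k) r.length with h|h
    · rw [prefixOf_app_le r d (m*k) h]
      have hdvd : k ∣ (r.take (m*k)).length := by
        rw [List.length_take, min_eq_left h]
        exact ⟨m, Nat.mul_comm m k⟩
      have hsplit := blockApply_append k sigma hk (r.take (m*k)) (r.drop (m*k)) hdvd
      rw [List.take_append_drop] at hsplit
      have haW : (blockApply k sigma (r.take (m*k))).length ≤ W.length := by
        rw [hW, hsplit, List.length_append]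
        omega
      rw [prefixOf_app_le W t _ haW, hW, hsplit, List.take_left]
    · have hqm : q ≤ m := by
        have : k * q < k * m := by rw [← hq]; rw [Nat.mul_comm k m]; exact h
        have := Nat.lt_of_mul_lt_mul_left this
        omega
      have hmk : m*k = r.length + (m - q)*k := by
        rw [hq]
        calc m * k = (q + (m - q)) * k := by congr 1; omega
          _ = q * k + (m-q) * k := by rw [Nat.add_mul]
          _ = k * q + (m-q) * k := by rw [Nat.mul_comm q k]
      rw [hmk, prefixOf_app r d ((m-q)*k),
        blockApply_append k sigma hk r _ ⟨q, hq⟩, hd.1 (m-q), ← hW]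
      rw [List.length_append, prefixOf_length, prefixOf_app W t _]
  · intro L
    obtain ⟨m, hm⟩ := hd.2 L
    refine ⟨q + m, ?_⟩
    rw [show (q+m)*k = r.length + m*k from by rw [hq, Nat.add_mul, Nat.mul_comm k q],
      prefixOf_app r d (m*k), blockApply_append k sigma hk r _ ⟨q, hq⟩,
      List.length_append]
    omega

lemma kRound_spec {r w : List Bool} (h : r ∈ kRound k w) :
    (∃ v, r = w ++ v) ∧ k ∣ r.length ∧ w.length ≤ r.length := by
  obtain ⟨v, hv, hlen⟩ := h
  refine ⟨⟨v, hv⟩, ⟨_, hlen⟩, ?_⟩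
  rw [hv, List.length_append]
  omega

lemma wIter_succ_iff (n : Nat) (w u : List Bool) :
    u ∈ wIter k sigma (n+1) w
      ↔ ∃ r ∈ kRound k w, u ∈ wIter k sigma n (blockApply k sigma r) := by
  induction n generalizing w u with
  | zero =>
      constructor
      · rintro ⟨p, hp, r, hr, rfl⟩
        rw [wIter] at hp
        rw [Set.mem_singleton_iff] at hp
        subst hp
        exact ⟨r, hr, rfl⟩
      · rintro ⟨r, hr, hu⟩
        rw [wIter] at hu
        rw [Set.mem_singleton_iff] at hu
        exact ⟨w, rfl, r, hr, hu⟩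
  | succ n ih =>
      constructor
      · rintro ⟨p, hp, r, hr, rfl⟩
        obtain ⟨r', hr', hp'⟩ := (ih w p).mp hp
        exact ⟨r', hr', p, hp', r, hr, rfl⟩
      · rintro ⟨r, hr, p, hp, r', hr', rfl⟩
        exact ⟨p, (ih w p).mpr ⟨r, hr, hp⟩, r', hr', rfl⟩

include hk hwlen herase in
lemma key_lemma (hOC : OC k sigma) :
    ∀ (n : Nat) (p : List Bool), [] ∈ wIter k sigma (n+1) p → ∀ t : Nat → Bool,
    ∃ s : Nat → Bool, NEZ s ∧ prefixOf s p.length = p ∧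
      (fSigma k sigma weps)^[n+1] (valInf s) = valInf t := by
  intro n
  induction n with
  | zero =>
      intro p hp t
      obtain ⟨r, hr, h0⟩ := (wIter_succ_iff 0 p []).mp hp
      rw [wIter, Set.mem_singleton_iff] at h0
      obtain ⟨⟨v, hv⟩, hdvd, hle⟩ := kRound_spec (k := k) hr
      obtain ⟨d, hdNEZ, hdF⟩ := exists_pre hk hwlen herase hOC t
      refine ⟨app r d, NEZ_app r d hdNEZ, ?_, ?_⟩
      · rw [prefixOf_app_le r d p.length hle, hv, List.take_left]
      · rw [Function.iterate_one,
          fSigma_val hk hwlen herase (app r d) (app (blockApply k sigma r) t)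
            (NEZ_app r d hdNEZ) (follows_app hk r hdvd d t hdF)]
        rw [← h0, app_nil]
  | succ n ih =>
      intro p hp t
      obtain ⟨r, hr, hmem⟩ := (wIter_succ_iff (n+1) p []).mp hp
      obtain ⟨⟨v, hv⟩, hdvd, hle⟩ := kRound_spec (k := k) hr
      obtain ⟨s', h1, h2, h3⟩ := ih (blockApply k sigma r) hmem t
      obtain ⟨d, hdNEZ, hdF⟩ :=
        exists_pre hk hwlen herase hOC (fun i => s' ((blockApply k sigma r).length + i))
      refine ⟨app r d, NEZ_app r d hdNEZ, ?_, ?_⟩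
      · rw [prefixOf_app_le r d p.length hle, hv, List.take_left]
      · have hstep : fSigma k sigma weps (valInf (app r d)) = valInf s' := by
          have := fSigma_val hk hwlen herase (app r d)
            (app (blockApply k sigma r) (fun i => s' ((blockApply k sigma r).length + i)))
            (NEZ_app r d hdNEZ) (follows_app hk r hdvd d _ hdF)
          rw [this]
          congr 1
          nth_rewrite 1 [← h2]
          exact app_prefix_shift s' (blockApply k sigma r).length
        rw [Function.iterate_succ_apply, hstep, h3]
end main3

lemma valFin_replicate_false (m : Nat) : valFin (List.replicate m false) = 0 := by
  induction m with
  | zero => exact valFin_nil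
  | succ m ih => rw [List.replicate_succ, valFin_cons, ih]; norm_num


/-- if `sigma` is strongly erasing and satisfies the optimality
condition, `fSigma` has sensitive dependence on initial conditions with
sensitivity constant `1/2`. -/
theorem fSigma_sensitive
    (k : Nat) (sigma : List Bool -> List Bool) (weps : List Bool)
    (hk : 2 ≤ k) (hlen : weps.length = k)
    (hne1 : weps ≠ List.replicate k true)
    (herase : ∀ w : List Bool, w.length = k → (sigma w = [] ↔ w = weps))
    (hSE : ∀ w : List Bool, ∃ n : Nat, [] ∈ wIter k sigma n w)
    (hOC : OC k sigma) :
    ∀ x ∈ Set.Icc (0:ℝ) 1, ∀ δ > 0, ∃ z ∈ Set.Icc (0:ℝ) 1,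
      |x - z| < δ ∧ ∃ n : Nat,
        (1:ℝ)/2 ≤ |(fSigma k sigma weps)^[n] x - (fSigma k sigma weps)^[n] z| := by
  intro x hx δ hδ
  have hk0 : 0 < k := by omega
  obtain ⟨m0, hm0⟩ := exists_pow_small δ hδ
  set m := m0 + 1 with hmdef
  have hmδ : ((2:ℝ))⁻¹ ^ m < δ :=
    lt_of_le_of_lt (pow_le_pow_of_le_one (by norm_num) (by norm_num) (by omega)) hm0
  have hpex : ∃ p : List Bool, p.length = m ∧ valFin p ≤ x ∧ x ≤ valFin p + 2⁻¹ ^ m := by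
    rcases eq_or_lt_of_le hx.1 with hx0|hx0
    · refine ⟨List.replicate m false, by simp, ?_, ?_⟩
      · rw [valFin_replicate_false, ← hx0]
      · rw [valFin_replicate_false, ← hx0]
        positivity
    · obtain ⟨ux, hNEZ, hval⟩ := exists_NEZ_expansion x hx0 hx.2
      refine ⟨prefixOf ux m, prefixOf_length ux m, ?_, ?_⟩
      · rw [← hval]; exact valFin_prefix_le ux m
      · rw [← hval]; exact valInf_le_prefix ux m
  obtain ⟨p, hplen, hpl, hpu⟩ := hpex
  obtain ⟨n0, hn0⟩ := hSE p
  have hn0pos : n0 ≠ 0 := by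
    intro h0
    rw [h0, wIter, Set.mem_singleton_iff] at hn0
    have : p.length = 0 := by rw [← hn0]; rfl
    omega
  obtain ⟨n, rfl⟩ : ∃ n, n0 = n + 1 := ⟨n0 - 1, by omega⟩
  have habs : ∀ s : Nat → Bool, NEZ s → prefixOf s p.length = p → |x - valInf s| < δ := by
    intro s _ hsp
    have l1 : valFin p ≤ valInf s := by
      have := valFin_prefix_le s p.length
      rwa [hsp] at this
    have l2 : valInf s ≤ valFin p + 2⁻¹ ^ m := by
      have := valInf_le_prefix s p.length
      rwa [hsp, hplen] at this
    have h3 : |x - valInf s| ≤ 2⁻¹ ^ m := abs_sub_le_iff.mpr ⟨by linarith, by linarith⟩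
    linarith
  by_cases hcmp : (fSigma k sigma weps)^[n+1] x ≤ 1/2
  · obtain ⟨s, hsNEZ, hsp, hsit⟩ :=
      key_lemma hk0 hlen herase hOC n p hn0 (fun _ => true)
    refine ⟨valInf s, ⟨valInf_nonneg s, valInf_le_one s⟩, habs s hsNEZ hsp, n+1, ?_⟩
    rw [hsit, valInf_const_true]
    exact le_abs.mpr (Or.inr (by linarith))
  · obtain ⟨s, hsNEZ, hsp, hsit⟩ :=
      key_lemma hk0 hlen herase hOC n p hn0 (fun _ => false)
    refine ⟨valInf s, ⟨valInf_nonneg s, valInf_le_one s⟩, habs s hsNEZ hsp, n+1, ?_⟩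
    rw [hsit, valInf_const_false]
    have hnn : 0 ≤ (fSigma k sigma weps)^[n+1] x := by
      rw [Function.iterate_succ_apply']
      exact fSigma_nonneg _
    push_neg at hcmp
    exact le_abs.mpr (Or.inl (by linarith))
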